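/- For independent exponentials with rates λ_A < λ_B and any v_T > 0, the OFA value v_{T,A} = ∫_0^∞ ∫_0^{v_A} [F_B(v + v_T) - F_B(max(v - v_T, 0))] dv dF_A(v_A) equals [λ_A(1 - e^{-v_T λ_B}) + λ_B(1 - e^{-v_T λ_A})] / (λ_A² + λ_A λ_B). -/

import Mathlib

open Real MeasureTheory Set intervalIntegral Filter

private lemma hde (c d x : ℝ) :
    HasDerivAt (fun y : ℝ => Real.exp (-(c * y + d))) (-(c * Real.exp (-(c * x + d)))) x := by
  have h1 : HasDerivAt (fun y : ℝ => -(c * y + d)) (-c) x := by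
    have h0 : HasDerivAt (fun y : ℝ => c * y + d) c x := by
      simpa using ((hasDerivAt_id x).const_mul c).add_const d
    exact h0.neg
  simpa [mul_comm] using h1.exp

private lemma hde0 (c x : ℝ) :
    HasDerivAt (fun y : ℝ => Real.exp (-(c * y))) (-(c * Real.exp (-(c * x)))) x := by
  simpa using hde c 0 x

private lemma intExp (a : ℝ) {c : ℝ} (hc : 0 < c) :
    IntegrableOn (fun x : ℝ => Real.exp (-(c * x))) (Ioi a) := by
  simpa [neg_mul] using exp_neg_integrableOn_Ioi a hc

private lemma tendExp {c : ℝ} (hc : 0 < c) :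
    Tendsto (fun x : ℝ => Real.exp (-(c * x))) atTop (nhds 0) := by
  have h2 : Tendsto (fun x : ℝ => c * x) atTop atTop :=
    tendsto_id.const_mul_atTop hc
  exact Real.tendsto_exp_neg_atTop_nhds_zero.comp h2

/-- For independent exponentials with rates `λ_A < λ_B` and `v_T > 0`,
the OFA value
`v_{T,A} = ∫_0^∞ ∫_0^{v_A} (F_B(v + v_T) - F_B(max (v - v_T) 0)) dv dF_A(v_A)`
equals `(λ_A (1 - e^{-v_T λ_B}) + λ_B (1 - e^{-v_T λ_A})) / (λ_A² + λ_A λ_B)`,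
where `F_B(t) = 1 - e^{-λ_B t}` for `t ≥ 0` and `0` for `t < 0`. -/
theorem stmt_11 (lA lB vT : ℝ) (hA : 0 < lA) (hAB : lA < lB) (hT : 0 < vT) :
    ∫ vA in Ioi (0:ℝ),
        (∫ v in (0:ℝ)..vA,
            ((1 - exp (-(lB * (v + vT)))) - (1 - exp (-(lB * max (v - vT) 0)))))
          * (lA * exp (-(lA * vA)))
      = (lA * (1 - exp (-(vT * lB))) + lB * (1 - exp (-(vT * lA))))
          / (lA ^ 2 + lA * lB) := by
  have hB : 0 < lB := hA.trans hAB
  have hAB' : 0 < lA + lB := by linarith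
  set h : ℝ → ℝ := fun v => exp (-(lB * max (v - vT) 0)) - exp (-(lB * (v + vT))) with hh
  have hcont : Continuous h := by fun_prop
  set I : ℝ → ℝ := fun x => ∫ v in (0:ℝ)..x, h v with hI
  have hI_deriv : ∀ x, HasDerivAt I (h x) x := fun x =>
    (hcont.integral_hasStrictDerivAt 0 x).hasDerivAt
  have hIcont : Continuous I :=
    continuous_iff_continuousAt.2 fun x => (hI_deriv x).continuousAt
  -- bound on h for nonnegative arguments
  have hb : ∀ v : ℝ, 0 ≤ v → ‖h v‖ ≤ 1 := by
    intro v hv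
    have h1 : exp (-(lB * max (v - vT) 0)) ≤ 1 := by
      apply exp_le_one_iff.2
      have : 0 ≤ max (v - vT) 0 := le_max_right _ _
      nlinarith
    have h2 : exp (-(lB * (v + vT))) ≤ 1 := by
      apply exp_le_one_iff.2
      nlinarith
    have h3 : 0 < exp (-(lB * max (v - vT) 0)) := exp_pos _
    have h4 : 0 < exp (-(lB * (v + vT))) := exp_pos _
    rw [Real.norm_eq_abs, abs_le]
    constructor <;> simp only [hh] <;> nlinarith
  have hI_bound : ∀ x : ℝ, 0 ≤ x → ‖I x‖ ≤ x := by
    intro x hx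
    have := intervalIntegral.norm_integral_le_of_norm_le_const
      (C := 1) (a := (0:ℝ)) (b := x) (f := h) ?_
    · simpa [abs_of_nonneg hx] using this
    · intro v hv
      rw [uIoc_of_le hx] at hv
      exact hb v hv.1.le
  -- key growth bound
  have hgrow : ∀ x : ℝ, 0 ≤ x → x * exp (-(lA * x)) ≤ (2 / lA) * exp (-(lA / 2 * x)) := by
    intro x hx
    have h1 : lA / 2 * x + 1 ≤ exp (lA / 2 * x) := Real.add_one_le_exp _
    have h2 : x ≤ (2 / lA) * exp (lA / 2 * x) := by
      rw [div_mul_eq_mul_div, le_div_iff₀ hA]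
      nlinarith
    have h3 : exp (lA / 2 * x) * exp (-(lA * x)) = exp (-(lA / 2 * x)) := by
      rw [← Real.exp_add]; congr 1; ring
    have h4 : 0 < exp (-(lA * x)) := exp_pos _
    calc x * exp (-(lA * x)) ≤ (2 / lA) * exp (lA / 2 * x) * exp (-(lA * x)) := by
          nlinarith
      _ = (2 / lA) * exp (-(lA / 2 * x)) := by rw [mul_assoc, h3]
  -- integrability of h x * exp(-(lA x)) on Ioi 0
  have int_he : IntegrableOn (fun x => h x * exp (-(lA * x))) (Ioi 0) := by
    apply (intExp 0 hA).mono' ((hcont.mul (by fun_prop)).aestronglyMeasurable.restrict)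
    filter_upwards [ae_restrict_mem measurableSet_Ioi] with x hx
    have := hb x (le_of_lt hx)
    have h4 : 0 < exp (-(lA * x)) := exp_pos _
    simp only [Pi.mul_apply]
    rw [norm_mul, Real.norm_eq_abs (exp _), abs_of_pos h4]
    nlinarith [abs_nonneg (h x)]
  have int_Ie : IntegrableOn (fun x => lA * I x * exp (-(lA * x)) - h x * exp (-(lA * x))) (Ioi 0) := by
    have intI : IntegrableOn (fun x => lA * I x * exp (-(lA * x))) (Ioi 0) := by
      apply Integrable.mono' (((intExp 0 (half_pos hA)).const_mul 2))
        (((continuous_const.mul hIcont).mul (by fun_prop)).aestronglyMeasurable.restrict)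
      filter_upwards [ae_restrict_mem measurableSet_Ioi] with x hx
      have h1 := hI_bound x hx.le
      have h2 := hgrow x hx.le
      have h4 : 0 < exp (-(lA * x)) := exp_pos _
      simp only [Pi.mul_apply]
      rw [norm_mul, norm_mul, Real.norm_eq_abs (exp _), abs_of_pos h4,
        Real.norm_eq_abs lA, abs_of_pos hA]
      calc lA * ‖I x‖ * exp (-(lA * x)) = lA * (‖I x‖ * exp (-(lA * x))) := by ring
        _ ≤ lA * (x * exp (-(lA * x))) := by gcongr
        _ ≤ lA * ((2 / lA) * exp (-(lA / 2 * x))) := by gcongr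
        _ = 2 * exp (-(lA / 2 * x)) := by field_simp
    exact intI.sub int_he
  -- FTC on (0, ∞) for u = -(I x * exp(-(lA x)))
  have hu_deriv : ∀ x : ℝ, HasDerivAt (fun x => -(I x * exp (-(lA * x))))
      (lA * I x * exp (-(lA * x)) - h x * exp (-(lA * x))) x := by
    intro x
    have := ((hI_deriv x).mul (hde0 lA x)).neg
    refine this.congr_deriv ?_
    ring
  have hu_tend : Tendsto (fun x => -(I x * exp (-(lA * x)))) atTop (nhds 0) := by
    have tb : Tendsto (fun x : ℝ => (2 / lA) * exp (-(lA / 2 * x))) atTop (nhds 0) := by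
      simpa using (tendExp (half_pos hA)).const_mul (2 / lA)
    apply squeeze_zero_norm' _ tb
    filter_upwards [eventually_ge_atTop (0:ℝ)] with x hx
    have h1 := hI_bound x hx
    have h2 := hgrow x hx
    have h4 : 0 < exp (-(lA * x)) := exp_pos _
    have e0 : ‖-(I x * exp (-(lA * x)))‖ = ‖I x‖ * exp (-(lA * x)) := by
      rw [norm_neg, norm_mul, Real.norm_eq_abs (exp _), abs_of_pos h4]
    simp only [e0]
    calc ‖I x‖ * exp (-(lA * x)) ≤ x * exp (-(lA * x)) := by gcongr
      _ ≤ 2 / lA * exp (-(lA / 2 * x)) := h2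
  have key : ∫ x in Ioi (0:ℝ), (lA * I x * exp (-(lA * x)) - h x * exp (-(lA * x))) = 0 := by
    have h0 : I 0 = 0 := intervalIntegral.integral_same
    have := integral_Ioi_of_hasDerivAt_of_tendsto' (f := fun x => -(I x * exp (-(lA * x))))
      (fun x _ => hu_deriv x) int_Ie hu_tend
    simpa [h0] using this
  -- rewrite LHS
  have inner_eq : ∀ vA : ℝ, (∫ v in (0:ℝ)..vA,
      ((1 - exp (-(lB * (v + vT)))) - (1 - exp (-(lB * max (v - vT) 0))))) = I vA := by
    intro vA
    apply intervalIntegral.integral_congr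
    intro v _
    simp only [hh]
    ring
  simp only [inner_eq]
  have split0 : ∫ x in Ioi (0:ℝ), I x * (lA * exp (-(lA * x)))
      = ∫ x in Ioi (0:ℝ), ((lA * I x * exp (-(lA * x)) - h x * exp (-(lA * x)))
          + h x * exp (-(lA * x))) := by
    apply setIntegral_congr_fun measurableSet_Ioi
    intro x _
    ring
  rw [split0, integral_add int_Ie int_he, key, zero_add]
  -- now compute ∫ x in Ioi 0, h x * exp(-(lA x))
  have hsplit : Ioc (0:ℝ) vT ∪ Ioi vT = Ioi 0 := Ioc_union_Ioi_eq_Ioi hT.le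
  rw [← hsplit, setIntegral_union (Ioc_disjoint_Ioi le_rfl) measurableSet_Ioi
    (int_he.mono_set (by rw [← hsplit]; exact subset_union_left))
    (int_he.mono_set (by rw [← hsplit]; exact subset_union_right))]
  -- part 1 : Ioc 0 vT
  have part1 : ∫ x in Ioc (0:ℝ) vT, h x * exp (-(lA * x))
      = (-exp (-(lA * vT)) / lA + exp (-(lA * vT)) * (exp (-(lB * vT)) * exp (-(lB * vT))) / (lA + lB))
        - (-1 / lA + exp (-(lB * vT)) / (lA + lB)) := by
    rw [← intervalIntegral.integral_of_le hT.le]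
    have e1 : ∀ x ∈ uIcc (0:ℝ) vT, h x * exp (-(lA * x))
        = exp (-(lA * x)) - exp (-((lA + lB) * x + lB * vT)) := by
      intro x hx
      rw [uIcc_of_le hT.le] at hx
      have hm : max (x - vT) 0 = 0 := max_eq_right (by linarith [hx.2])
      simp only [hh, hm, mul_zero, neg_zero, Real.exp_zero]
      rw [sub_mul, one_mul, ← Real.exp_add]
      congr 2
      ring
    rw [intervalIntegral.integral_congr e1]
    have hF : ∀ x ∈ uIcc (0:ℝ) vT, HasDerivAt
        (fun y => -exp (-(lA * y)) / lA + exp (-((lA + lB) * y + lB * vT)) / (lA + lB))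
        (exp (-(lA * x)) - exp (-((lA + lB) * x + lB * vT))) x := by
      intro x _
      have := (((hde0 lA x).neg).div_const lA).add ((hde (lA + lB) (lB * vT) x).div_const (lA + lB))
      refine this.congr_deriv ?_
      field_simp
      ring
    rw [intervalIntegral.integral_eq_sub_of_hasDerivAt hF ((by fun_prop : Continuous fun x : ℝ => exp (-(lA * x)) - exp (-((lA + lB) * x + lB * vT))).intervalIntegrable 0 vT)]
    have e2 : -((lA + lB) * vT + lB * vT) = -(lA * vT) + (-(lB * vT) + -(lB * vT)) := by ring
    have e3 : -((lA + lB) * 0 + lB * vT) = -(lB * vT) := by ring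
    rw [e2, e3, Real.exp_add, Real.exp_add]
    norm_num
  -- part 2 : Ioi vT
  have part2 : ∫ x in Ioi vT, h x * exp (-(lA * x))
      = exp (-(lA * vT)) / (lA + lB)
        - exp (-(lA * vT)) * (exp (-(lB * vT)) * exp (-(lB * vT))) / (lA + lB) := by
    have e1 : ∀ x ∈ Ioi vT, h x * exp (-(lA * x))
        = exp (-((lA + lB) * x - lB * vT)) - exp (-((lA + lB) * x + lB * vT)) := by
      intro x hx
      have hm : max (x - vT) 0 = x - vT := max_eq_left (by simp only [mem_Ioi] at hx; linarith)
      simp only [hh, hm]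
      rw [sub_mul, ← Real.exp_add, ← Real.exp_add]
      congr 2 <;> ring
    rw [setIntegral_congr_fun measurableSet_Ioi e1]
    have hint : IntegrableOn (fun x => exp (-((lA + lB) * x - lB * vT))
        - exp (-((lA + lB) * x + lB * vT))) (Ioi vT) := by
      have i1 : IntegrableOn (fun x : ℝ => exp (lB * vT) * exp (-((lA + lB) * x))) (Ioi vT) :=
        (intExp vT hAB').const_mul _
      have i2 : IntegrableOn (fun x : ℝ => exp (-(lB * vT)) * exp (-((lA + lB) * x))) (Ioi vT) :=
        (intExp vT hAB').const_mul _
      have : (fun x : ℝ => exp (-((lA + lB) * x - lB * vT)) - exp (-((lA + lB) * x + lB * vT)))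
          = fun x => exp (lB * vT) * exp (-((lA + lB) * x))
              - exp (-(lB * vT)) * exp (-((lA + lB) * x)) := by
        funext x
        rw [← Real.exp_add, ← Real.exp_add]
        congr 2 <;> ring
      rw [this]
      exact i1.sub i2
    have hF : ∀ x ∈ Ici vT, HasDerivAt
        (fun y => (-exp (-((lA + lB) * y - lB * vT)) + exp (-((lA + lB) * y + lB * vT))) / (lA + lB))
        (exp (-((lA + lB) * x - lB * vT)) - exp (-((lA + lB) * x + lB * vT))) x := by
      intro x _
      have h1 := hde (lA + lB) (-(lB * vT)) x
      have h2 := hde (lA + lB) (lB * vT) x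
      have h1' : HasDerivAt (fun y : ℝ => exp (-((lA + lB) * y - lB * vT)))
          (-((lA + lB) * exp (-((lA + lB) * x - lB * vT)))) x := by
        simpa [sub_eq_add_neg] using h1
      have := ((h1'.neg).add h2).div_const (lA + lB)
      refine this.congr_deriv ?_
      field_simp
      ring
    have hFt : Tendsto (fun y => (-exp (-((lA + lB) * y - lB * vT))
        + exp (-((lA + lB) * y + lB * vT))) / (lA + lB)) atTop (nhds 0) := by
      have t1 : Tendsto (fun y : ℝ => exp (-((lA + lB) * y - lB * vT))) atTop (nhds 0) := by
        have : (fun y : ℝ => exp (-((lA + lB) * y - lB * vT)))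
            = fun y => exp (lB * vT) * exp (-((lA + lB) * y)) := by
          funext x; rw [← Real.exp_add]; congr 1; ring
        rw [this]
        simpa using (tendExp hAB').const_mul (exp (lB * vT))
      have t2 : Tendsto (fun y : ℝ => exp (-((lA + lB) * y + lB * vT))) atTop (nhds 0) := by
        have : (fun y : ℝ => exp (-((lA + lB) * y + lB * vT)))
            = fun y => exp (-(lB * vT)) * exp (-((lA + lB) * y)) := by
          funext x; rw [← Real.exp_add]; congr 1; ring
        rw [this]
        simpa using (tendExp hAB').const_mul (exp (-(lB * vT)))
      simpa using (t1.neg.add t2).div_const (lA + lB)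
    rw [integral_Ioi_of_hasDerivAt_of_tendsto' hF hint hFt]
    have e2 : -((lA + lB) * vT - lB * vT) = -(lA * vT) := by ring
    have e3 : -((lA + lB) * vT + lB * vT) = -(lA * vT) + (-(lB * vT) + -(lB * vT)) := by ring
    rw [e2, e3, Real.exp_add, Real.exp_add]
    ring
  rw [part1, part2, mul_comm vT lB, mul_comm vT lA]
  have hne1 : lA ≠ 0 := ne_of_gt hA
  have hne2 : lA + lB ≠ 0 := ne_of_gt hAB'
  have hne3 : lA ^ 2 + lA * lB ≠ 0 := by positivity
  field_simp
  ring
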